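/- The expectation value of the symmetric generalized binomial distribution equals that of the ordinary binomial: ∑_{k=0}^n k · 𝔭_k^{(n)}(η) = η n for all n and η ∈ [0,1], where 𝔭_k^{(n)}(η) = (x_n!/(x_{n-k}! x_k!)) q_k(η) q_{n-k}(1-η). -/

import Mathlib

open PowerSeries Finset

/-- Formal exponential of a power series (intended for series with zero constant term):
coefficientwise `exp F = ∑_k F^k / k!`, which is a finite sum in each coefficient. -/
noncomputable def expS (F : PowerSeries ℝ) : PowerSeries ℝ :=
  PowerSeries.mk fun n => ∑ k ∈ Finset.range (n + 1),
    (1 / (k.factorial : ℝ)) * PowerSeries.coeff n (F ^ k)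

/-- Formal logarithm of a power series (intended for series with constant term 1):
coefficientwise `log N = ∑_{k≥1} (-1)^{k+1} (N-1)^k / k`. -/
noncomputable def logS (N : PowerSeries ℝ) : PowerSeries ℝ :=
  PowerSeries.mk fun n => ∑ k ∈ Finset.range (n + 1),
    ((-1 : ℝ) ^ (k + 1) / (k : ℝ)) * PowerSeries.coeff n ((N - 1) ^ k)

/-- The formal power `N^η := exp (η · log N)`. -/
noncomputable def powS (N : PowerSeries ℝ) (η : ℝ) : PowerSeries ℝ :=
  expS (η • logS N)

/-- Deformed factorial `x_n! = x_1 x_2 ⋯ x_n`, with `x_0! = 1`. -/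
noncomputable def xfac (x : ℕ → ℝ) (n : ℕ) : ℝ := ∏ k ∈ Finset.Icc 1 n, x k

lemma coeff_pow_mul_eq_zero {u A : PowerSeries ℝ} (hu : constantCoeff u = 0)
    {m k : ℕ} (h : m < k) : PowerSeries.coeff m (u ^ k * A) = 0 := by
  have hd : (X : PowerSeries ℝ) ^ k ∣ u ^ k * A :=
    Dvd.dvd.mul_right (pow_dvd_pow_of_dvd (PowerSeries.X_dvd_iff.2 hu) k) A
  exact PowerSeries.X_pow_dvd_iff.1 hd m h

lemma coeff_pow_eq_zero {u : PowerSeries ℝ} (hu : constantCoeff u = 0)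
    {m k : ℕ} (h : m < k) : PowerSeries.coeff m (u ^ k) = 0 := by
  simpa using coeff_pow_mul_eq_zero (A := 1) hu h

lemma coeff_mul_mk (A : PowerSeries ℝ) (c : ℕ → ℝ) (g : ℕ → PowerSeries ℝ)
    (hg : ∀ m k, m < k → PowerSeries.coeff m (g k) = 0) (n : ℕ) :
    PowerSeries.coeff n (A * PowerSeries.mk fun m => ∑ k ∈ Finset.range (m + 1),
        c k * PowerSeries.coeff m (g k))
      = ∑ k ∈ Finset.range (n + 1), c k * PowerSeries.coeff n (A * g k) := by
  rw [coeff_mul]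
  have step : ∀ p ∈ antidiagonal n,
      PowerSeries.coeff p.1 A * PowerSeries.coeff p.2 (PowerSeries.mk fun m =>
        ∑ k ∈ Finset.range (m + 1), c k * PowerSeries.coeff m (g k))
      = ∑ k ∈ Finset.range (n + 1),
          c k * (PowerSeries.coeff p.1 A * PowerSeries.coeff p.2 (g k)) := by
    intro p hp
    rw [coeff_mk]
    have hsub : Finset.range (p.2 + 1) ⊆ Finset.range (n + 1) := by
      apply Finset.range_subset_range.2
      have := Finset.HasAntidiagonal.mem_antidiagonal.1 hp
      omega
    rw [Finset.sum_subset hsub (by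
      intro k hk hk'
      have : p.2 < k := by
        simp only [Finset.mem_range] at hk hk'; omega
      rw [hg _ _ this, mul_zero])]
    rw [Finset.mul_sum]
    exact Finset.sum_congr rfl fun k _ => by ring
  rw [Finset.sum_congr rfl step, Finset.sum_comm]
  exact Finset.sum_congr rfl fun k _ => by rw [coeff_mul, Finset.mul_sum]

lemma constantCoeff_expS {F : PowerSeries ℝ} (hF : constantCoeff F = 0) :
    constantCoeff (expS F) = 1 := by
  have : PowerSeries.coeff 0 (expS F) = 1 := by
    rw [expS, coeff_mk]
    simp
  simpa [coeff_zero_eq_constantCoeff] using this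

lemma key_pow (F : PowerSeries ℝ) (n k : ℕ) :
    ((k : ℝ) + 1) * PowerSeries.coeff n (F ^ k * d⁄dX ℝ F)
      = PowerSeries.coeff (n + 1) (F ^ (k + 1)) * ((n : ℝ) + 1) := by
  have h1 := congrArg (PowerSeries.coeff n) (Derivation.leibniz_pow (d⁄dX ℝ) F (k + 1))
  rw [PowerSeries.coeff_derivative] at h1
  simp only [Nat.add_sub_cancel, smul_eq_mul] at h1
  rw [map_nsmul, nsmul_eq_mul] at h1
  push_cast at h1
  linarith [h1]

lemma derivative_expS (F : PowerSeries ℝ) (hF : constantCoeff F = 0) :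
    d⁄dX ℝ (expS F) = d⁄dX ℝ F * expS F := by
  ext n
  have hR : PowerSeries.coeff n (d⁄dX ℝ F * expS F)
      = ∑ k ∈ Finset.range (n + 1),
          (1 / (k.factorial : ℝ)) * PowerSeries.coeff n (d⁄dX ℝ F * F ^ k) := by
    rw [expS]
    exact coeff_mul_mk _ _ _ (fun m k h => coeff_pow_eq_zero hF h) n
  rw [hR, PowerSeries.coeff_derivative, expS, coeff_mk, Finset.sum_mul,
    Finset.sum_range_succ']
  have h0 : 1 / ((0:ℕ).factorial : ℝ) * PowerSeries.coeff (n + 1) (F ^ 0) * ((n:ℝ) + 1) = 0 := by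
    simp
  rw [h0, add_zero]
  refine Finset.sum_congr rfl fun k _ => ?_
  have hk := key_pow F n k
  rw [mul_comm (d⁄dX ℝ F) (F ^ k)]
  have hkf : ((k.factorial : ℝ)) ≠ 0 := Nat.cast_ne_zero.2 k.factorial_ne_zero
  have hk1 : ((k:ℝ) + 1) ≠ 0 := by positivity
  rw [Nat.factorial_succ]
  push_cast
  field_simp
  linear_combination (-1 : ℝ) * hk

lemma constantCoeff_logS {N : PowerSeries ℝ} (hN : constantCoeff N = 1) :
    constantCoeff (logS N) = 0 := by
  have : PowerSeries.coeff 0 (logS N) = 0 := by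
    rw [logS, coeff_mk]
    simp
  simpa [coeff_zero_eq_constantCoeff] using this

lemma derivative_logS_eq (N : PowerSeries ℝ) (hN : constantCoeff N = 1) :
    d⁄dX ℝ (logS N) = PowerSeries.mk fun n => ∑ j ∈ Finset.range (n + 1),
      (-1 : ℝ) ^ j * PowerSeries.coeff n ((N - 1) ^ j * d⁄dX ℝ N) := by
  have hu : constantCoeff (N - 1) = 0 := by
    simp [hN]
  have hdu : d⁄dX ℝ (N - 1) = d⁄dX ℝ N := by
    rw [map_sub]
    simp
  ext n
  rw [PowerSeries.coeff_derivative, coeff_mk, logS, coeff_mk, Finset.sum_mul,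
    Finset.sum_range_succ']
  have h0 : (-1:ℝ) ^ (0 + 1) / ((0:ℕ):ℝ) * PowerSeries.coeff (n + 1) ((N - 1) ^ 0) * ((n:ℝ) + 1) = 0 := by
    simp
  rw [h0, add_zero]
  refine Finset.sum_congr rfl fun k _ => ?_
  have hk := key_pow (N - 1) n k
  rw [hdu] at hk
  have hk1 : ((k:ℝ) + 1) ≠ 0 := by positivity
  push_cast
  field_simp
  linear_combination (-((-1:ℝ)^k)) * hk

lemma N_mul_derivative_logS (N : PowerSeries ℝ) (hN : constantCoeff N = 1) :
    N * d⁄dX ℝ (logS N) = d⁄dX ℝ N := by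
  have hu : constantCoeff (N - 1) = 0 := by simp [hN]
  have hg : ∀ m k, m < k → PowerSeries.coeff m ((N - 1) ^ k * d⁄dX ℝ N) = 0 :=
    fun m k h => coeff_pow_mul_eq_zero hu h
  ext n
  rw [derivative_logS_eq N hN]
  have hsplit : N = 1 + (N - 1) := by ring
  set M := PowerSeries.mk fun n => ∑ j ∈ Finset.range (n + 1),
      (-1 : ℝ) ^ j * PowerSeries.coeff n ((N - 1) ^ j * d⁄dX ℝ N) with hM
  have h1 : PowerSeries.coeff n (N * M) = PowerSeries.coeff n M
      + PowerSeries.coeff n ((N - 1) * M) := by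
    rw [hsplit] ; rw [add_mul, one_mul, map_add]
    simp [hsplit.symm]
  rw [h1]
  have h2 : PowerSeries.coeff n ((N - 1) * M)
      = ∑ j ∈ Finset.range (n + 1),
          (-1 : ℝ) ^ j * PowerSeries.coeff n ((N - 1) ^ (j + 1) * d⁄dX ℝ N) := by
    rw [hM]
    rw [coeff_mul_mk (N - 1) _ _ hg n]
    refine Finset.sum_congr rfl fun j _ => ?_
    rw [show (N - 1) * ((N - 1) ^ j * d⁄dX ℝ N) = (N - 1) ^ (j + 1) * d⁄dX ℝ N by ring]
  have h3 : PowerSeries.coeff n M = ∑ j ∈ Finset.range (n + 1),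
      (-1 : ℝ) ^ j * PowerSeries.coeff n ((N - 1) ^ j * d⁄dX ℝ N) := coeff_mk _ _
  rw [h2, h3]
  -- telescoping
  set a : ℕ → ℝ := fun j => PowerSeries.coeff n ((N - 1) ^ j * d⁄dX ℝ N) with ha
  have hlast : a (n + 1) = 0 := hg n (n + 1) (by omega)
  have hT1 : ∑ j ∈ Finset.range (n + 1), (-1:ℝ) ^ j * a j
      = (∑ j ∈ Finset.range n, (-1:ℝ) ^ (j + 1) * a (j + 1)) + a 0 := by
    rw [Finset.sum_range_succ']
    simp
  have hT2 : ∑ j ∈ Finset.range (n + 1), (-1:ℝ) ^ j * a (j + 1)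
      = ∑ j ∈ Finset.range n, (-1:ℝ) ^ j * a (j + 1) := by
    rw [Finset.sum_range_succ, hlast, mul_zero, add_zero]
  rw [hT1, hT2]
  have hcancel : (∑ j ∈ Finset.range n, (-1:ℝ) ^ (j + 1) * a (j + 1))
      + ∑ j ∈ Finset.range n, (-1:ℝ) ^ j * a (j + 1) = 0 := by
    rw [← Finset.sum_add_distrib]
    apply Finset.sum_eq_zero
    intro j _
    ring
  have ha0 : a 0 = PowerSeries.coeff n (d⁄dX ℝ N) := by
    rw [ha]; simp
  linarith [hcancel, ha0.symm ▸ (rfl : a 0 = a 0)]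

lemma ode_unique (h A B : PowerSeries ℝ) (hA : d⁄dX ℝ A = h * A) (hB : d⁄dX ℝ B = h * B)
    (h0 : constantCoeff A = constantCoeff B) : A = B := by
  ext n
  induction n using Nat.strong_induction_on with
  | _ n ih =>
    match n with
    | 0 => simpa [coeff_zero_eq_constantCoeff] using h0
    | m + 1 =>
      have h1 : PowerSeries.coeff m (d⁄dX ℝ A) = PowerSeries.coeff m (d⁄dX ℝ B) := by
        rw [hA, hB, coeff_mul, coeff_mul]
        refine Finset.sum_congr rfl fun p hp => ?_
        have hp2 : p.2 < m + 1 := by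
          have := Finset.HasAntidiagonal.mem_antidiagonal.1 hp; omega
        rw [ih p.2 hp2]
      rw [PowerSeries.coeff_derivative, PowerSeries.coeff_derivative] at h1
      have hm : ((m:ℝ) + 1) ≠ 0 := by positivity
      exact mul_right_cancel₀ hm h1

lemma expS_add (F G : PowerSeries ℝ) (hF : constantCoeff F = 0)
    (hG : constantCoeff G = 0) : expS (F + G) = expS F * expS G := by
  apply ode_unique (d⁄dX ℝ F + d⁄dX ℝ G)
  · rw [derivative_expS (F + G) (by rw [map_add, hF, hG, add_zero]), map_add]
  · have : d⁄dX ℝ (expS F * expS G)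
        = expS F * d⁄dX ℝ (expS G) + expS G * d⁄dX ℝ (expS F) := by
      exact Derivation.leibniz _ _ _
    rw [this, derivative_expS F hF, derivative_expS G hG]
    ring
  · rw [constantCoeff_expS (by rw [map_add, hF, hG, add_zero]), map_mul,
      constantCoeff_expS hF, constantCoeff_expS hG, mul_one]

lemma expS_logS (N : PowerSeries ℝ) (hN : constantCoeff N = 1) :
    expS (logS N) = N := by
  apply ode_unique (d⁄dX ℝ (logS N))
  · exact derivative_expS _ (constantCoeff_logS hN)
  · rw [← N_mul_derivative_logS N hN, mul_comm]
  · rw [constantCoeff_expS (constantCoeff_logS hN), hN]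

lemma coeff_X_mul_derivative (A : PowerSeries ℝ) (k : ℕ) :
    PowerSeries.coeff k ((X : PowerSeries ℝ) * d⁄dX ℝ A) = (k : ℝ) * PowerSeries.coeff k A := by
  cases k with
  | zero =>
    simp [coeff_zero_eq_constantCoeff]
  | succ m =>
    rw [PowerSeries.coeff_succ_X_mul, PowerSeries.coeff_derivative]
    push_cast
    ring

theorem stmt9 (x : ℕ → ℝ) (hx : ∀ n, 1 ≤ n → 0 < x n)
    (N : PowerSeries ℝ) (hN : N = PowerSeries.mk fun n => 1 / xfac x n)
    (q : ℕ → ℝ → ℝ)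
    (hq : ∀ n η, q n η = xfac x n * PowerSeries.coeff n (powS N η))
    (p : ℕ → ℕ → ℝ → ℝ)
    (hp : ∀ n k η, p n k η =
      (xfac x n / (xfac x (n - k) * xfac x k)) * q k η * q (n - k) (1 - η)) :
    ∀ (n : ℕ), ∀ η ∈ Set.Icc (0 : ℝ) 1,
      ∑ k ∈ Finset.range (n + 1), (k : ℝ) * p n k η = η * n := by
  have hxpos : ∀ m, 0 < xfac x m := by
    intro m
    exact Finset.prod_pos fun i hi => hx i (Finset.mem_Icc.1 hi).1
  have hxne : ∀ m, xfac x m ≠ 0 := fun m => (hxpos m).ne'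
  have hcN : ∀ m, PowerSeries.coeff m N = 1 / xfac x m := by
    intro m; rw [hN, coeff_mk]
  have hN1 : constantCoeff N = 1 := by
    have := hcN 0
    rw [coeff_zero_eq_constantCoeff] at this
    rw [this]
    simp [xfac]
  have hL0 : constantCoeff (logS N) = 0 := constantCoeff_logS hN1
  have hsm : ∀ (a : ℝ), constantCoeff (a • logS N) = 0 := by
    intro a
    rw [smul_eq_C_mul, map_mul, hL0, mul_zero]
  intro n η _
  have hQmul : powS N η * powS N (1 - η) = N := by
    rw [powS, powS, ← expS_add _ _ (hsm η) (hsm (1 - η)), ← add_smul]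
    norm_num
    exact expS_logS N hN1
  have hkey : (X : PowerSeries ℝ) * d⁄dX ℝ (powS N η) * powS N (1 - η)
      = η • ((X : PowerSeries ℝ) * d⁄dX ℝ N) := by
    rw [powS, powS, derivative_expS _ (hsm η)]
    rw [powS, powS] at hQmul
    have hd : d⁄dX ℝ (η • logS N) = η • d⁄dX ℝ (logS N) := (d⁄dX ℝ).map_smul η (logS N)
    rw [hd, smul_mul_assoc, mul_smul_comm, smul_mul_assoc]
    congr 1
    rw [show (X : PowerSeries ℝ) * (d⁄dX ℝ (logS N) * expS (η • logS N)) * expS ((1 - η) • logS N)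
        = (X : PowerSeries ℝ)
          * (d⁄dX ℝ (logS N) * (expS (η • logS N) * expS ((1 - η) • logS N))) from by ring,
      hQmul,
      show (X : PowerSeries ℝ) * (d⁄dX ℝ (logS N) * N)
        = (X : PowerSeries ℝ) * (N * d⁄dX ℝ (logS N)) from by ring,
      N_mul_derivative_logS N hN1]
  have hterm : ∀ k ∈ Finset.range (n + 1), (k : ℝ) * p n k η
      = xfac x n * (PowerSeries.coeff k ((X : PowerSeries ℝ) * d⁄dX ℝ (powS N η))
          * PowerSeries.coeff (n - k) (powS N (1 - η))) := by
    intro k _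
    rw [hp, hq, hq, coeff_X_mul_derivative]
    have h1 := hxne k
    have h2 := hxne (n - k)
    field_simp
  rw [Finset.sum_congr rfl hterm, ← Finset.mul_sum]
  have hsum : ∑ k ∈ Finset.range (n + 1),
      PowerSeries.coeff k ((X : PowerSeries ℝ) * d⁄dX ℝ (powS N η))
        * PowerSeries.coeff (n - k) (powS N (1 - η))
      = PowerSeries.coeff n (((X : PowerSeries ℝ) * d⁄dX ℝ (powS N η)) * powS N (1 - η)) := by
    rw [coeff_mul, Finset.Nat.sum_antidiagonal_eq_sum_range_succ_mk]
  rw [hsum, hkey, (PowerSeries.coeff n).map_smul, smul_eq_mul,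
    coeff_X_mul_derivative, hcN]
  have h3 := hxne n
  field_simp
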